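/- Let T be a tree with diameter at least 3 such that γ_{t,coi}(T) = |V(T)| - |L(T)| and such that T has at least one isolated support vertex. Then every semi-support vertex of T is adjacent to some isolated support vertex. -/

import Mathlib

open scoped Classical

/-- A set `D` is a total co-independent dominating set of `G`:
it is a total dominating set and its complement is a nonempty independent set. -/
def TotalCoIndep {V : Type*} [Fintype V] (G : SimpleGraph V) (D : Finset V) : Prop :=
  (∀ v : V, ∃ u ∈ D, G.Adj v u) ∧
  (Dᶜ : Finset V).Nonempty ∧
  ∀ u ∈ (Dᶜ : Finset V), ∀ w ∈ (Dᶜ : Finset V), ¬ G.Adj u w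

/-- The total co-independent domination number. -/
noncomputable def gammaTcoi {V : Type*} [Fintype V] (G : SimpleGraph V) : ℕ :=
  sInf {k | ∃ D : Finset V, TotalCoIndep G D ∧ D.card = k}

/-- A finite set of vertices is independent. -/
def IsIndepF {V : Type*} (G : SimpleGraph V) (B : Finset V) : Prop :=
  ∀ u ∈ B, ∀ w ∈ B, ¬ G.Adj u w

/-- The independence number. -/
noncomputable def indepNum {V : Type*} [Fintype V] (G : SimpleGraph V) : ℕ :=
  sSup {k | ∃ B : Finset V, IsIndepF G B ∧ B.card = k}

/-- A leaf: a vertex with exactly one neighbor (degree one). -/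
def IsLeaf {V : Type*} (G : SimpleGraph V) (v : V) : Prop :=
  ∃! u, G.Adj v u

/-- The set of leaves. -/
noncomputable def leaves {V : Type*} [Fintype V] (G : SimpleGraph V) : Finset V :=
  Finset.univ.filter (fun v => IsLeaf G v)

/-- A support vertex: a non-leaf adjacent to a leaf. -/
def IsSupport {V : Type*} (G : SimpleGraph V) (v : V) : Prop :=
  ¬ IsLeaf G v ∧ ∃ u, G.Adj v u ∧ IsLeaf G u

/-- A semi-support vertex: a non-leaf, non-support vertex adjacent to a support vertex. -/
def IsSemiSupport {V : Type*} (G : SimpleGraph V) (v : V) : Prop :=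
  ¬ IsLeaf G v ∧ ¬ IsSupport G v ∧ ∃ u, G.Adj v u ∧ IsSupport G u

/-- An isolated support vertex: a support vertex with no support vertex as neighbor. -/
def IsIsolatedSupport {V : Type*} (G : SimpleGraph V) (v : V) : Prop :=
  IsSupport G v ∧ ∀ u, G.Adj v u → ¬ IsSupport G u

private lemma walk_closed {V : Type*} (G : SimpleGraph V) (S : V → Prop)
    (hS : ∀ x y, G.Adj x y → S x → S y) :
    ∀ {u w : V}, S u → G.Walk u w → S w := by
  intro u w hu p
  revert hu
  induction p with
  | nil => exact fun h => h
  | cons h q ih => exact fun hu => ih (hS _ _ h hu)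

/-- If `T` is a tree with diameter at least 3, `γ_{t,coi}(T) = n - |L(T)|`, and `T` has an
isolated support vertex, then every semi-support vertex is adjacent to an isolated support. -/
theorem stmt5 {V : Type*} [Fintype V] (T : SimpleGraph V) (hT : T.IsTree)
    (hdiam : ∃ x y : V, 3 ≤ T.dist x y)
    (hval : gammaTcoi T = Fintype.card V - (leaves T).card)
    (hiso : ∃ v : V, IsIsolatedSupport T v) :
    ∀ v : V, IsSemiSupport T v → ∃ u : V, IsIsolatedSupport T u ∧ T.Adj v u := by
  intro v hv
  by_contra hns
  obtain ⟨hvnl, hvns, u0, hvu0, hu0s⟩ := hv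
  obtain ⟨x, y, hxy3⟩ := hdiam
  have hconn : T.Connected := hT.isConnected
  -- adjacency-length-one bound
  have hadj_dist : ∀ a b : V, T.Adj a b → T.dist a b ≤ 1 := by
    intro a b hab
    calc T.dist a b ≤ hab.toWalk.length := SimpleGraph.dist_le _
    _ = 1 := by simp [SimpleGraph.Adj.toWalk]
  -- no two leaves are adjacent
  have hll : ∀ a b : V, IsLeaf T a → IsLeaf T b → ¬ T.Adj a b := by
    intro a b ha hb hab
    have hstep : ∀ p q : V, T.Adj p q → (p = a ∨ p = b) → (q = a ∨ q = b) := by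
      rintro p q hpq (rfl | rfl)
      · obtain ⟨u, _, hun⟩ := ha
        right; rw [hun q hpq, ← hun b hab]
      · obtain ⟨u, _, hun⟩ := hb
        left; rw [hun q hpq, ← hun a hab.symm]
    have hx : x = a ∨ x = b := by
      obtain ⟨p⟩ := hconn.preconnected a x
      exact walk_closed T (fun z => z = a ∨ z = b) hstep (Or.inl rfl) p
    have hy : y = a ∨ y = b := by
      obtain ⟨p⟩ := hconn.preconnected a y
      exact walk_closed T (fun z => z = a ∨ z = b) hstep (Or.inl rfl) p
    have h1 := hadj_dist a b hab
    have h2 := hadj_dist b a hab.symm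
    have h3 : T.dist a a = 0 := SimpleGraph.dist_self
    have h4 : T.dist b b = 0 := SimpleGraph.dist_self
    rcases hx with rfl | rfl <;> rcases hy with rfl | rfl <;> omega
  -- every non-leaf has a non-leaf neighbor
  have hnln : ∀ w : V, ¬ IsLeaf T w → ∃ z, T.Adj w z ∧ ¬ IsLeaf T z := by
    intro w hw
    by_contra h
    push_neg at h
    have hstep : ∀ p q : V, T.Adj p q → (p = w ∨ T.Adj w p) → (q = w ∨ T.Adj w q) := by
      rintro p q hpq (rfl | hp)
      · right; exact hpq
      · obtain ⟨u, _, hun⟩ := h p hp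
        left; rw [hun q hpq, ← hun w hp.symm]
    have hx : x = w ∨ T.Adj w x := by
      obtain ⟨p⟩ := hconn.preconnected w x
      exact walk_closed T (fun z => z = w ∨ T.Adj w z) hstep (Or.inl rfl) p
    have hy : y = w ∨ T.Adj w y := by
      obtain ⟨p⟩ := hconn.preconnected w y
      exact walk_closed T (fun z => z = w ∨ T.Adj w z) hstep (Or.inl rfl) p
    have dx : T.dist x w ≤ 1 := by
      rcases hx with rfl | hx
      · simp [SimpleGraph.dist_self]
      · exact hadj_dist x w hx.symm
    have dy : T.dist w y ≤ 1 := by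
      rcases hy with rfl | hy
      · simp [SimpleGraph.dist_self]
      · exact hadj_dist w y hy
    have htri : T.dist x y ≤ T.dist x w + T.dist w y := hconn.dist_triangle
    omega
  -- the smaller total co-independent dominating set
  set D : Finset V := (insert v (leaves T))ᶜ with hD
  have hmemD : ∀ z : V, z ∈ D ↔ z ≠ v ∧ ¬ IsLeaf T z := by
    intro z
    simp [hD, leaves]
  have hTCI : TotalCoIndep T D := by
    refine ⟨?_, ?_, ?_⟩
    · -- total dominating
      intro w
      by_cases hwv : w = v
      · subst hwv
        refine ⟨u0, (hmemD u0).mpr ⟨?_, hu0s.1⟩, hvu0⟩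
        rintro rfl
        exact T.loopless.irrefl _ hvu0
      · by_cases hwl : IsLeaf T w
        · obtain ⟨s, hs, hsun⟩ := hwl
          have hsnl : ¬ IsLeaf T s := fun hsl => hll w s ⟨s, hs, hsun⟩ hsl hs
          refine ⟨s, (hmemD s).mpr ⟨?_, hsnl⟩, hs⟩
          rintro rfl
          exact hvns ⟨hvnl, w, hs.symm, ⟨s, hs, hsun⟩⟩
        · -- w is a non-leaf vertex other than v
          by_contra hcon
          push_neg at hcon
          have key : ∀ z : V, T.Adj w z → z = v ∨ IsLeaf T z := by
            intro z hwz
            by_contra hc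
            push_neg at hc
            exact hcon z ((hmemD z).mpr ⟨hc.1, hc.2⟩) hwz
          obtain ⟨z, hwz, hznl⟩ := hnln w hwl
          have hzv : z = v := by
            rcases key z hwz with h | h
            · exact h
            · exact absurd h hznl
          have hwv : T.Adj w v := hzv ▸ hwz
          -- w has a second neighbor which must be a leaf, so w is a support
          have hy2 : ∃ y2, T.Adj w y2 ∧ y2 ≠ v := by
            by_contra hy2
            push_neg at hy2
            exact hwl ⟨v, hwv, fun y2 h => hy2 y2 h⟩
          obtain ⟨y2, hwy2, hy2v⟩ := hy2
          have hy2l : IsLeaf T y2 := by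
            rcases key y2 hwy2 with h | h
            · exact absurd h hy2v
            · exact h
          have hwsupp : IsSupport T w := ⟨hwl, y2, hwy2, hy2l⟩
          have hwiso : IsIsolatedSupport T w := by
            refine ⟨hwsupp, fun z hz hzs => ?_⟩
            rcases key z hz with h | h
            · exact hvns (h ▸ hzs)
            · exact hzs.1 h
          exact hns ⟨w, hwiso, hwv.symm⟩
    · -- nonempty complement
      refine ⟨v, ?_⟩
      simp [hD]
    · -- complement independent
      intro a ha b hb hab
      simp only [hD, compl_compl, Finset.mem_insert] at ha hb
      rcases ha with rfl | ha <;> rcases hb with rfl | hb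
      · exact T.loopless.irrefl _ hab
      · simp [leaves] at hb
        exact hvns ⟨hvnl, b, hab, hb⟩
      · simp [leaves] at ha
        exact hvns ⟨hvnl, a, hab.symm, ha⟩
      · simp [leaves] at ha hb
        exact hll a b ha hb hab
  -- cardinality contradiction
  have hvnotl : v ∉ leaves T := by simp [leaves, hvnl]
  have hcardD : D.card = Fintype.card V - ((leaves T).card + 1) := by
    rw [hD, Finset.card_compl, Finset.card_insert_of_notMem hvnotl]
  have hle : gammaTcoi T ≤ D.card := Nat.sInf_le ⟨D, hTCI, rfl⟩
  have hlt : (leaves T).card < Fintype.card V := by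
    refine Finset.card_lt_card (Finset.ssubset_univ_iff.mpr ?_)
    intro h
    exact hvnotl (h ▸ Finset.mem_univ v)
  omega
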